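/- Let $n \ge 2$, $1 \le k \le n-1$, $\rho = (k-1)/2$, $\sigma = (n-k)/2 - 1$, and let $\{Y_{j,\lambda}\}_{\lambda=1}^{d_n(j)}$ be an orthonormal basis (with respect to the normalized measure $d_*x$) of the spherical harmonics of even degree $j$ on $S^n$. Define $\hat Y_{j,\lambda}(v) = \alpha_j \int_{S^n} Y_{j,\lambda}(x)\,R_{j/2}^{(\rho,\sigma)}(2|x^Tv|^2-1)\,d_*x$ for $v \in V_{n+1,n-k}$, where $\alpha_j = \varkappa_j\sqrt{d_n(j)}$ with $\varkappa_j$ as in the paper. Then the addition formula $R_{j/2}^{(\rho,\sigma)}(2|x^Tv|^2-1) = \alpha_j^{-1}\sum_{\lambda=1}^{d_n(j)} Y_{j,\lambda}(x)\,\hat Y_{j,\lambda}(v)$ holds for all $x \in S^n$ and $v \in V_{n+1,n-k}$. -/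

import Mathlib

open Real MeasureTheory Matrix

/-- The Jacobi polynomial `P_m^{(ρ,σ)}`, given by its explicit hypergeometric series. -/
noncomputable def jacobiP (ρ σ : ℝ) (m : ℕ) (t : ℝ) : ℝ :=
  (Real.Gamma (ρ + m + 1) / (m.factorial * Real.Gamma (ρ + σ + m + 1))) *
    ∑ s ∈ Finset.range (m + 1),
      (m.choose s : ℝ) * Real.Gamma (ρ + σ + m + s + 1) / Real.Gamma (ρ + s + 1) *
        ((t - 1) / 2) ^ s

/-- The normalized Jacobi polynomial `R_m^{(ρ,σ)}(t) = P_m^{(ρ,σ)}(t)/P_m^{(ρ,σ)}(1)`. -/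
noncomputable def jacobiR (ρ σ : ℝ) (m : ℕ) (t : ℝ) : ℝ :=
  jacobiP ρ σ m t / jacobiP ρ σ m 1

/-- The surface area `σ_m = 2π^{(m+1)/2}/Γ((m+1)/2)` of the unit sphere `S^m ⊂ ℝ^{m+1}`. -/
noncomputable def sigmaS (m : ℕ) : ℝ :=
  2 * Real.pi ^ (((m : ℝ) + 1) / 2) / Real.Gamma (((m : ℝ) + 1) / 2)

/-- `d_n(j)`, the dimension of the space of spherical harmonics of degree `j` on `S^n`:
`d_n(j) = (n+2j-1)(n+j-2)!/(j!(n-1)!)`. -/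
def dN (n j : ℕ) : ℕ :=
  (n + 2 * j - 1) * (n + j - 2).factorial / (j.factorial * (n - 1).factorial)

/-- The constant `ϰ_j²` from the paper. -/
noncomputable def kappaSq (n k j : ℕ) : ℝ :=
  sigmaS n * (2 * (j : ℝ) + (n : ℝ) - 1) * Real.Gamma (((j : ℝ) + (k : ℝ) + 1) / 2) *
      Real.Gamma (((j : ℝ) + (n : ℝ) - 1) / 2) /
    (sigmaS (n - k - 1) * sigmaS k * Real.Gamma (((k : ℝ) + 1) / 2) ^ 2 *
      Real.Gamma ((j : ℝ) / 2 + 1) * Real.Gamma (((j : ℝ) + (n : ℝ) - (k : ℝ)) / 2))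

/-- `α_j = ϰ_j √(d_n(j))`. -/
noncomputable def alphaJ (n k j : ℕ) : ℝ :=
  Real.sqrt (kappaSq n k j) * Real.sqrt (dN n j)

/-- `|x^T v|`, the length of the orthogonal projection of `x` onto the span of the
columns of `v`. -/
noncomputable def stiefelProj (n k : ℕ) (x : EuclideanSpace ℝ (Fin (n + 1)))
    (v : Matrix (Fin (n + 1)) (Fin (n - k)) ℝ) : ℝ :=
  Real.sqrt (∑ c : Fin (n - k), (∑ i : Fin (n + 1), x i * v i c) ^ 2)

/-- `Y` is a spherical harmonic of degree `j` on `S^n`. -/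
def IsSphericalHarmonic (n j : ℕ) (Y : EuclideanSpace ℝ (Fin (n + 1)) → ℝ) : Prop :=
  ∃ P : MvPolynomial (Fin (n + 1)) ℝ, P.IsHomogeneous j ∧
    (∑ i : Fin (n + 1), MvPolynomial.pderiv i (MvPolynomial.pderiv i P)) = 0 ∧
    ∀ x ∈ Metric.sphere (0 : EuclideanSpace ℝ (Fin (n + 1))) 1,
      Y x = MvPolynomial.eval (fun i => x i) P


namespace AddFormAux
open MvPolynomial

variable {N : ℕ}

noncomputable def lap (p : MvPolynomial (Fin N) ℝ) : MvPolynomial (Fin N) ℝ :=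
  ∑ i, pderiv i (pderiv i p)

noncomputable def gdot (p q : MvPolynomial (Fin N) ℝ) : MvPolynomial (Fin N) ℝ :=
  ∑ i, pderiv i p * pderiv i q

lemma lap_C_mul (a : ℝ) (p : MvPolynomial (Fin N) ℝ) : lap (C a * p) = C a * lap p := by
  simp [lap, pderiv_C_mul, Finset.mul_sum]

lemma lap_sum {ι : Type*} (s : Finset ι) (f : ι → MvPolynomial (Fin N) ℝ) :
    lap (∑ i ∈ s, f i) = ∑ i ∈ s, lap (f i) := by
  simp only [lap, _root_.map_sum]
  exact Finset.sum_comm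

lemma lap_mul (p q : MvPolynomial (Fin N) ℝ) :
    lap (p * q) = lap p * q + p * lap q + 2 * gdot p q := by
  have h : ∀ i : Fin N, pderiv i (pderiv i (p * q)) =
      pderiv i (pderiv i p) * q + p * pderiv i (pderiv i q) +
        2 * (pderiv i p * pderiv i q) := by
    intro i
    simp only [pderiv_mul, _root_.map_add]
    ring
  simp only [lap, gdot, h, Finset.sum_add_distrib, Finset.sum_mul, Finset.mul_sum]

lemma gdot_pow_pow (p q : MvPolynomial (Fin N) ℝ) (a b : ℕ) :
    gdot (p ^ a) (q ^ b) =
      (a : MvPolynomial (Fin N) ℝ) * b * (p ^ (a - 1) * (q ^ (b - 1) * gdot p q)) := by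
  simp only [gdot, pderiv_pow, Finset.mul_sum]
  exact Finset.sum_congr rfl fun i _ => by ring

lemma gdot_pow_left (p q : MvPolynomial (Fin N) ℝ) (a : ℕ) :
    gdot (p ^ a) q = (a : MvPolynomial (Fin N) ℝ) * (p ^ (a - 1) * gdot p q) := by
  have := gdot_pow_pow p q a 1
  simpa using this

lemma lap_pow (p : MvPolynomial (Fin N) ℝ) (g l : ℝ)
    (hg : gdot p p = C g * p) (hl : lap p = C l) (s : ℕ) :
    lap (p ^ s) = C ((s : ℝ) * ((s : ℝ) - 1) * g + (s : ℝ) * l) * p ^ (s - 1) := by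
  induction s with
  | zero => simp [lap]
  | succ t ih =>
    rcases Nat.eq_zero_or_pos t with ht | ht
    · subst ht
      simp [pow_one, hl]
    · obtain ⟨u, rfl⟩ : ∃ u, t = u + 1 := ⟨t - 1, by omega⟩
      rw [pow_succ, mul_comm (p ^ (u + 1)) p, lap_mul, hl, ih]
      have h1 : (u + 1 : ℕ) - 1 = u := rfl
      have h2 : (u + 1 + 1 : ℕ) - 1 = u + 1 := rfl
      rw [h1, h2]
      have hcomm : gdot p (p ^ (u + 1)) = gdot (p ^ (u + 1)) p := by
        simp [gdot, mul_comm]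
      rw [hcomm, gdot_pow_left, hg, h1]
      rw [show ((u + 1 : ℕ) : MvPolynomial (Fin N) ℝ) = C ((u : ℝ) + 1) by
        rw [← C_eq_coe_nat]; push_cast; ring]
      simp only [_root_.map_add, _root_.map_mul, _root_.map_sub, _root_.map_one, _root_.map_ofNat]
      push_cast
      ring_nf
      simp only [_root_.map_add, _root_.map_one, _root_.map_ofNat, _root_.map_natCast]
      ring


lemma lap_term (Q W : MvPolynomial (Fin N) ℝ) (gq gw gx lq lw : ℝ)
    (hqq : gdot Q Q = C gq * Q) (hww : gdot W W = C gw * W) (hqw : gdot Q W = C gx * Q)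
    (hlq : lap Q = C lq) (hlw : lap W = C lw) (s t : ℕ) :
    lap (Q ^ s * W ^ t) =
      C ((s : ℝ) * ((s : ℝ) - 1) * gq + (s : ℝ) * lq) * (Q ^ (s - 1) * W ^ t) +
        C ((t : ℝ) * ((t : ℝ) - 1) * gw + (t : ℝ) * lw + 2 * (s : ℝ) * (t : ℝ) * gx) *
          (Q ^ s * W ^ (t - 1)) := by
  rw [lap_mul, lap_pow Q gq lq hqq hlq, lap_pow W gw lw hww hlw, gdot_pow_pow, hqw]
  rcases Nat.eq_zero_or_pos s with hs | hs
  · subst hs; push_cast; simp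
  rcases Nat.eq_zero_or_pos t with ht | ht
  · subst ht; push_cast; simp
  obtain ⟨a, rfl⟩ : ∃ a, s = a + 1 := ⟨s - 1, by omega⟩
  obtain ⟨b, rfl⟩ : ∃ b, t = b + 1 := ⟨t - 1, by omega⟩
  simp only [Nat.add_sub_cancel]
  rw [show ((a + 1 : ℕ) : MvPolynomial (Fin N) ℝ) = C ((a : ℝ) + 1) by
        rw [← C_eq_coe_nat]; push_cast; ring,
     show ((b + 1 : ℕ) : MvPolynomial (Fin N) ℝ) = C ((b : ℝ) + 1) by
        rw [← C_eq_coe_nat]; push_cast; ring]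
  simp only [_root_.map_add, _root_.map_mul, _root_.map_sub, _root_.map_one, _root_.map_ofNat]
  push_cast
  ring_nf
  simp only [_root_.map_add, _root_.map_one, _root_.map_ofNat, _root_.map_natCast]
  ring

section Concrete

variable (n k : ℕ) (v : Matrix (Fin (n + 1)) (Fin (n - k)) ℝ)

noncomputable def polL (c : Fin (n - k)) : MvPolynomial (Fin (n + 1)) ℝ :=
  ∑ i, C (v i c) * X i

noncomputable def polW : MvPolynomial (Fin (n + 1)) ℝ := ∑ i, X i ^ 2

noncomputable def polU : MvPolynomial (Fin (n + 1)) ℝ := ∑ c, polL n k v c ^ 2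

lemma pderiv_polL (i : Fin (n + 1)) (c : Fin (n - k)) :
    MvPolynomial.pderiv i (polL n k v c) = C (v i c) := by
  classical
  simp [polL, MvPolynomial.pderiv_X, Pi.single_apply, Finset.sum_ite_eq']

lemma pderiv_polW (i : Fin (n + 1)) :
    MvPolynomial.pderiv i (polW n) = 2 * X i := by
  classical
  simp [polW, MvPolynomial.pderiv_pow, MvPolynomial.pderiv_X, Pi.single_apply,
    mul_ite, Finset.sum_ite_eq']

lemma pderiv_polU (i : Fin (n + 1)) :
    MvPolynomial.pderiv i (polU n k v) = ∑ c, 2 * C (v i c) * polL n k v c := by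
  simp [polU, MvPolynomial.pderiv_pow, pderiv_polL]
  exact Finset.sum_congr rfl fun c _ => by ring

variable {v} in
lemma hvv (hv : vᵀ * v = 1) (c c' : Fin (n - k)) :
    (∑ i, v i c * v i c') = if c = c' then 1 else 0 := by
  have h := congrFun (congrFun hv c) c'
  simpa [Matrix.mul_apply, Matrix.one_apply, Matrix.transpose_apply] using h

variable {n k v} in
lemma gdot_UU (hv : vᵀ * v = 1) :
    gdot (polU n k v) (polU n k v) = C 4 * polU n k v := by
  classical
  simp only [gdot, pderiv_polU]
  have h1 : ∀ i : Fin (n + 1),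
      (∑ c, 2 * C (v i c) * polL n k v c) * (∑ c', 2 * C (v i c') * polL n k v c') =
        ∑ c, ∑ c', C (v i c * v i c') * (4 * (polL n k v c * polL n k v c')) := by
    intro i
    rw [Finset.sum_mul_sum]
    refine Finset.sum_congr rfl fun c _ => Finset.sum_congr rfl fun c' _ => ?_
    rw [_root_.map_mul]; ring
  simp only [h1]
  rw [Finset.sum_comm]
  have h2 : ∀ c : Fin (n - k),
      (∑ i : Fin (n + 1), ∑ c', C (v i c * v i c') * (4 * (polL n k v c * polL n k v c'))) =
        ∑ c', C (∑ i, v i c * v i c') * (4 * (polL n k v c * polL n k v c')) := by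
    intro c
    rw [Finset.sum_comm]
    refine Finset.sum_congr rfl fun c' _ => ?_
    rw [_root_.map_sum, Finset.sum_mul]
  simp only [h2, hvv n k hv, apply_ite C, _root_.map_one, _root_.map_zero, ite_mul, one_mul,
    zero_mul, Finset.sum_ite_eq, Finset.mem_univ, if_true]
  rw [polU, Finset.mul_sum]
  refine Finset.sum_congr rfl fun c _ => ?_
  rw [_root_.map_ofNat]
  ring

variable {n k v} in
lemma gdot_WW : gdot (polW n : MvPolynomial (Fin (n+1)) ℝ) (polW n) = C 4 * polW n := by
  simp only [gdot, pderiv_polW]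
  rw [polW, Finset.mul_sum]
  refine Finset.sum_congr rfl fun i _ => ?_
  rw [_root_.map_ofNat]
  ring

variable {n k v} in
lemma gdot_UW (hv : vᵀ * v = 1) :
    gdot (polU n k v) (polW n) = C 4 * polU n k v := by
  classical
  simp only [gdot, pderiv_polU, pderiv_polW]
  have h1 : ∀ i : Fin (n + 1),
      (∑ c, 2 * C (v i c) * polL n k v c) * (2 * X i) =
        ∑ c, 4 * polL n k v c * (C (v i c) * X i) := by
    intro i
    rw [Finset.sum_mul]
    exact Finset.sum_congr rfl fun c _ => by ring
  simp only [h1]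
  rw [Finset.sum_comm]
  have h2 : ∀ c : Fin (n - k),
      (∑ i : Fin (n + 1), 4 * polL n k v c * (C (v i c) * X i)) =
        4 * polL n k v c * polL n k v c := by
    intro c
    rw [← Finset.mul_sum]
    rfl
  simp only [h2]
  rw [polU, Finset.mul_sum]
  refine Finset.sum_congr rfl fun c _ => ?_
  rw [_root_.map_ofNat]
  ring

variable {n k v} in
lemma lap_W : lap (polW n : MvPolynomial (Fin (n+1)) ℝ) = C (2 * ((n : ℝ) + 1)) := by
  classical
  have h : ∀ i : Fin (n + 1), MvPolynomial.pderiv i (2 * X i : MvPolynomial (Fin (n+1)) ℝ) = C 2 := by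
    intro i
    rw [show (2 : MvPolynomial (Fin (n+1)) ℝ) = C 2 from (_root_.map_ofNat C 2).symm,
      pderiv_C_mul, MvPolynomial.pderiv_X_self, mul_one]
  simp only [lap, pderiv_polW, h, Finset.sum_const, Finset.card_univ, Fintype.card_fin,
    nsmul_eq_mul, ← C_eq_coe_nat, ← _root_.map_mul]
  congr 1
  push_cast
  ring

variable {n k v} in
lemma lap_U (hv : vᵀ * v = 1) (hkn : k ≤ n) :
    lap (polU n k v) = C (2 * ((n : ℝ) - (k : ℝ))) := by
  classical
  simp only [lap, pderiv_polU, _root_.map_sum]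
  have h : ∀ (i : Fin (n + 1)) (c : Fin (n - k)),
      MvPolynomial.pderiv i (2 * C (v i c) * polL n k v c) = C (2 * (v i c * v i c)) := by
    intro i c
    rw [show (2 * C (v i c) : MvPolynomial (Fin (n+1)) ℝ) = C (2 * v i c) from by
      rw [_root_.map_mul, _root_.map_ofNat]]
    rw [pderiv_C_mul, pderiv_polL, ← _root_.map_mul]
    congr 1
    ring
  simp only [h]
  rw [Finset.sum_comm]
  have h2 : ∀ c : Fin (n - k),
      (∑ i : Fin (n + 1), C (2 * (v i c * v i c)) : MvPolynomial (Fin (n+1)) ℝ) = C 2 := by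
    intro c
    rw [← _root_.map_sum]
    congr 1
    rw [show (∑ i : Fin (n+1), 2 * (v i c * v i c)) = 2 * ∑ i : Fin (n+1), v i c * v i c from by
      rw [Finset.mul_sum]]
    rw [hvv n k hv c c]
    simp
  simp only [h2, Finset.sum_const, Finset.card_univ, Fintype.card_fin, nsmul_eq_mul,
    ← C_eq_coe_nat, ← _root_.map_mul]
  congr 1
  rw [Nat.cast_sub hkn]
  ring

noncomputable def polQ : MvPolynomial (Fin (n + 1)) ℝ := polU n k v - polW n

variable {n k v}

lemma gdot_sub_left (p q r : MvPolynomial (Fin (n+1)) ℝ) :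
    gdot (p - q) r = gdot p r - gdot q r := by
  simp [gdot, _root_.map_sub, sub_mul, Finset.sum_sub_distrib]

lemma gdot_sub_right (p q r : MvPolynomial (Fin (n+1)) ℝ) :
    gdot p (q - r) = gdot p q - gdot p r := by
  simp [gdot, _root_.map_sub, mul_sub, Finset.sum_sub_distrib]

lemma gdot_symm (p q : MvPolynomial (Fin (n+1)) ℝ) : gdot p q = gdot q p := by
  simp [gdot, mul_comm]

lemma lap_sub (p q : MvPolynomial (Fin (n+1)) ℝ) : lap (p - q) = lap p - lap q := by
  simp [lap, _root_.map_sub, Finset.sum_sub_distrib]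

lemma gdot_QQ (hv : vᵀ * v = 1) :
    gdot (polQ n k v) (polQ n k v) = C (-4) * polQ n k v := by
  rw [polQ, gdot_sub_left, gdot_sub_right, gdot_sub_right, gdot_UU hv, gdot_WW,
    gdot_symm (polW n) (polU n k v), gdot_UW hv]
  rw [show (C (-4:ℝ) : MvPolynomial (Fin (n+1)) ℝ) = -C 4 from by rw [map_neg, _root_.map_ofNat]]
  ring

lemma gdot_QW (hv : vᵀ * v = 1) :
    gdot (polQ n k v) (polW n) = C 4 * polQ n k v := by
  rw [polQ, gdot_sub_left, gdot_UW hv, gdot_WW]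
  ring

lemma lap_Q (hv : vᵀ * v = 1) (hkn : k ≤ n) :
    lap (polQ n k v) = C (-2 * ((k : ℝ) + 1)) := by
  rw [polQ, lap_sub, lap_U hv hkn, lap_W, ← _root_.map_sub]
  congr 1
  ring

lemma polL_hom (c : Fin (n - k)) : (polL n k v c).IsHomogeneous 1 := by
  apply MvPolynomial.IsHomogeneous.sum
  intro i _
  simpa using (MvPolynomial.isHomogeneous_C _ (v i c)).mul (MvPolynomial.isHomogeneous_X ℝ i)

lemma polU_hom : (polU n k v).IsHomogeneous 2 := by
  apply MvPolynomial.IsHomogeneous.sum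
  intro c _
  simpa using (polL_hom (n := n) (k := k) (v := v) c).pow 2

lemma polW_hom : (polW n : MvPolynomial (Fin (n+1)) ℝ).IsHomogeneous 2 := by
  apply MvPolynomial.IsHomogeneous.sum
  intro i _
  simpa using (MvPolynomial.isHomogeneous_X (σ := Fin (n+1)) ℝ i).pow 2

lemma polQ_hom : (polQ n k v).IsHomogeneous 2 :=
  (polU_hom).sub polW_hom

end Concrete

lemma sum_pair_zero {M : Type*} [AddCommGroup M] (m : ℕ) (F G : ℕ → M)
    (hF0 : F 0 = 0) (hGm : G m = 0) (h : ∀ s < m, F (s + 1) + G s = 0) :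
    (∑ s ∈ Finset.range (m + 1), F s) + (∑ s ∈ Finset.range (m + 1), G s) = 0 := by
  rw [Finset.sum_range_succ' F m, Finset.sum_range_succ, hF0, hGm, add_zero, add_zero,
    ← Finset.sum_add_distrib]
  exact Finset.sum_eq_zero fun s hs => h s (Finset.mem_range.mp hs)

end AddFormAux

noncomputable def betaC (rho sig : ℝ) (m s : ℕ) : ℝ :=
  (m.choose s : ℝ) * Real.Gamma (rho + sig + m + s + 1) / Real.Gamma (rho + s + 1)

lemma beta_key (n k m s : ℕ) (hn : 2 ≤ n) (hk : 1 ≤ k) (hs : s < m) :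
    betaC (((k : ℝ) - 1) / 2) (((n : ℝ) - (k : ℝ)) / 2 - 1) m (s + 1) * ((s : ℝ) + 1) *
        (2 * (s : ℝ) + (k : ℝ) + 1) =
      betaC (((k : ℝ) - 1) / 2) (((n : ℝ) - (k : ℝ)) / 2 - 1) m s * ((m : ℝ) - (s : ℝ)) *
        (2 * (m : ℝ) + 2 * (s : ℝ) + (n : ℝ) - 1) := by
  have hn' : (2 : ℝ) ≤ (n : ℝ) := by exact_mod_cast hn
  have hk' : (1 : ℝ) ≤ (k : ℝ) := by exact_mod_cast hk
  have hm0 : (0 : ℝ) ≤ (m : ℝ) := Nat.cast_nonneg m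
  have hs0 : (0 : ℝ) ≤ (s : ℝ) := Nat.cast_nonneg s
  obtain ⟨a, ha⟩ : ∃ a : ℝ, a = ((n : ℝ) - 1) / 2 + (m : ℝ) := ⟨_, rfl⟩
  obtain ⟨b, hb⟩ : ∃ b : ℝ, b = ((k : ℝ) + 1) / 2 := ⟨_, rfl⟩
  have hx : (0 : ℝ) < a + s := by rw [ha]; nlinarith
  have hy : (0 : ℝ) < b + s := by rw [hb]; nlinarith
  have e1 : ((k : ℝ) - 1) / 2 + (((n : ℝ) - (k : ℝ)) / 2 - 1) + (m : ℝ) + ((s + 1 : ℕ) : ℝ) + 1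
      = (a + s) + 1 := by push_cast; rw [ha]; ring
  have e2 : ((k : ℝ) - 1) / 2 + ((s + 1 : ℕ) : ℝ) + 1 = (b + s) + 1 := by
    push_cast; rw [hb]; ring
  have e3 : ((k : ℝ) - 1) / 2 + (((n : ℝ) - (k : ℝ)) / 2 - 1) + (m : ℝ) + (s : ℝ) + 1
      = a + s := by rw [ha]; ring
  have e4 : ((k : ℝ) - 1) / 2 + (s : ℝ) + 1 = b + s := by rw [hb]; ring
  have hch : ((m.choose (s + 1) : ℝ)) * ((s : ℝ) + 1) = (m.choose s : ℝ) * ((m : ℝ) - (s : ℝ)) := by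
    have h := Nat.choose_succ_right_eq m s
    have h2 : ((m.choose (s + 1) * (s + 1) : ℕ) : ℝ) = ((m.choose s * (m - s) : ℕ) : ℝ) := by
      exact_mod_cast h
    push_cast [Nat.cast_sub hs.le] at h2
    linarith
  have hga : Real.Gamma ((a + s) + 1) = (a + s) * Real.Gamma (a + s) :=
    Real.Gamma_add_one hx.ne'
  have hgb : Real.Gamma ((b + s) + 1) = (b + s) * Real.Gamma (b + s) :=
    Real.Gamma_add_one hy.ne'
  have hΓb : Real.Gamma (b + s) ≠ 0 := (Real.Gamma_pos_of_pos hy).ne'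
  rw [betaC, betaC, e1, e2, e3, e4, hga, hgb]
  have hkb : 2 * (s : ℝ) + (k : ℝ) + 1 = 2 * (b + s) := by rw [hb]; ring
  have hna : 2 * (m : ℝ) + 2 * (s : ℝ) + (n : ℝ) - 1 = 2 * (a + s) := by rw [ha]; ring
  rw [hkb, hna]
  rw [div_mul_eq_mul_div, div_mul_eq_mul_div, div_mul_eq_mul_div, div_mul_eq_mul_div]
  rw [div_eq_div_iff (by positivity) (by positivity)]
  linear_combination ((a + (s:ℝ)) * Real.Gamma (a + (s:ℝ)) * Real.Gamma (b + (s:ℝ)) * 2 *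
    (b + (s:ℝ))) * hch

lemma zonal_harmonic (n k j : ℕ) (hn : 2 ≤ n) (hk : 1 ≤ k) (hkn : k ≤ n - 1) (hj : Even j)
    (v : Matrix (Fin (n + 1)) (Fin (n - k)) ℝ) (hv : vᵀ * v = 1) :
    IsSphericalHarmonic n j (fun z =>
      jacobiR (((k : ℝ) - 1) / 2) (((n : ℝ) - (k : ℝ)) / 2 - 1) (j / 2)
        (2 * stiefelProj n k z v ^ 2 - 1)) := by
  classical
  obtain ⟨m, hm⟩ := hj
  have hjm : j / 2 = m := by omega
  have hkn' : k ≤ n := by omega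
  set rho : ℝ := ((k : ℝ) - 1) / 2 with hrho
  set sig : ℝ := ((n : ℝ) - (k : ℝ)) / 2 - 1 with hsig
  set K : ℝ := (Real.Gamma (rho + m + 1) / (m.factorial * Real.Gamma (rho + sig + m + 1))) /
      jacobiP rho sig m 1 with hK
  set P : MvPolynomial (Fin (n + 1)) ℝ :=
    MvPolynomial.C K * ∑ s ∈ Finset.range (m + 1),
      MvPolynomial.C (betaC rho sig m s) *
        (AddFormAux.polQ n k v ^ s * AddFormAux.polW n ^ (m - s)) with hP
  refine ⟨P, ?_, ?_, ?_⟩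
  · -- homogeneous of degree j
    have : P.IsHomogeneous (0 + j) := by
      apply (MvPolynomial.isHomogeneous_C _ K).mul
      apply MvPolynomial.IsHomogeneous.sum
      intro s hs
      have hsm : s ≤ m := by
        simpa [Nat.lt_succ_iff] using hs
      have h1 := (AddFormAux.polQ_hom (n := n) (k := k) (v := v)).pow s
      have h2 := (AddFormAux.polW_hom (n := n)).pow (m - s)
      have h3 := (MvPolynomial.isHomogeneous_C (Fin (n + 1)) (betaC rho sig m s)).mul (h1.mul h2)
      convert h3 using 1
      omega
    simpa using this
  · -- Laplacian zero
    show AddFormAux.lap P = 0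
    set F : ℕ → MvPolynomial (Fin (n + 1)) ℝ := fun s =>
      MvPolynomial.C (betaC rho sig m s *
          ((s : ℝ) * ((s : ℝ) - 1) * (-4) + (s : ℝ) * (-2 * ((k : ℝ) + 1)))) *
        (AddFormAux.polQ n k v ^ (s - 1) * AddFormAux.polW n ^ (m - s)) with hFdef
    set G : ℕ → MvPolynomial (Fin (n + 1)) ℝ := fun s =>
      MvPolynomial.C (betaC rho sig m s *
          (((m - s : ℕ) : ℝ) * (((m - s : ℕ) : ℝ) - 1) * 4 +
            ((m - s : ℕ) : ℝ) * (2 * ((n : ℝ) + 1)) +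
            2 * (s : ℝ) * ((m - s : ℕ) : ℝ) * 4)) *
        (AddFormAux.polQ n k v ^ s * AddFormAux.polW n ^ (m - s - 1)) with hGdef
    have hterm : ∀ s ∈ Finset.range (m + 1),
        AddFormAux.lap (MvPolynomial.C (betaC rho sig m s) *
          (AddFormAux.polQ n k v ^ s * AddFormAux.polW n ^ (m - s))) = F s + G s := by
      intro s hs
      rw [AddFormAux.lap_C_mul]
      rw [AddFormAux.lap_term (AddFormAux.polQ n k v) (AddFormAux.polW n)
        (-4) 4 4 (-2 * ((k : ℝ) + 1)) (2 * ((n : ℝ) + 1))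
        (AddFormAux.gdot_QQ hv) (AddFormAux.gdot_WW) (AddFormAux.gdot_QW hv)
        (AddFormAux.lap_Q hv hkn') (AddFormAux.lap_W) s (m - s)]
      rw [hFdef, hGdef, mul_add]
      simp only [_root_.map_mul]
      ring
    have hF0 : F 0 = 0 := by
      simp [hFdef]
    have hGm : G m = 0 := by
      simp [hGdef]
    have hFG : ∀ s, s < m → F (s + 1) + G s = 0 := by
      intro s hsm
      rw [hFdef, hGdef]
      simp only []
      have hexp1 : (s + 1) - 1 = s := rfl
      have hexp2 : m - (s + 1) = m - s - 1 := by omega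
      rw [hexp1, hexp2, ← add_mul, ← _root_.map_add]
      have hns : ((s + 1 : ℕ) : ℝ) = (s : ℝ) + 1 := by push_cast; ring
      have hms : ((m - s : ℕ) : ℝ) = (m : ℝ) - (s : ℝ) := by
        rw [Nat.cast_sub hsm.le]
      have hcoef : betaC rho sig m (s + 1) *
            (((s + 1 : ℕ) : ℝ) * (((s + 1 : ℕ) : ℝ) - 1) * (-4) +
              ((s + 1 : ℕ) : ℝ) * (-2 * ((k : ℝ) + 1))) +
          betaC rho sig m s *
            (((m - s : ℕ) : ℝ) * (((m - s : ℕ) : ℝ) - 1) * 4 +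
              ((m - s : ℕ) : ℝ) * (2 * ((n : ℝ) + 1)) +
              2 * (s : ℝ) * ((m - s : ℕ) : ℝ) * 4) = 0 := by
        have hkey := beta_key n k m s hn hk hsm
        rw [hms, hns, hrho, hsig]
        linear_combination (-2 : ℝ) * hkey
      rw [hcoef]
      simp
    rw [hP, AddFormAux.lap_C_mul, AddFormAux.lap_sum, Finset.sum_congr rfl hterm,
      Finset.sum_add_distrib, AddFormAux.sum_pair_zero m F G hF0 hGm hFG, mul_zero]
  · -- evaluation on the sphere
    intro x hx
    have hnorm : (∑ i, x i ^ 2) = 1 := by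
      have h1 : ‖x‖ = 1 := by simpa using hx
      have h2 := EuclideanSpace.norm_eq x
      rw [h1] at h2
      have h3 : Real.sqrt (∑ i, ‖x i‖ ^ 2) = 1 := h2.symm
      have h4 : (∑ i, ‖x i‖ ^ 2) = 1 := by
        have := congrArg (fun t => t ^ 2) h3
        simpa [Real.sq_sqrt (Finset.sum_nonneg fun i _ => sq_nonneg _)] using this
      simpa [Real.norm_eq_abs, sq_abs] using h4
    set u : ℝ := ∑ c : Fin (n - k), (∑ i : Fin (n + 1), x i * v i c) ^ 2 with hu
    have hu0 : 0 ≤ u := Finset.sum_nonneg fun c _ => sq_nonneg _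
    have hproj : stiefelProj n k x v ^ 2 = u := Real.sq_sqrt hu0
    have hevalL : ∀ c, MvPolynomial.eval (fun i => x i) (AddFormAux.polL n k v c) =
        ∑ i : Fin (n + 1), x i * v i c := by
      intro c
      rw [AddFormAux.polL]
      rw [_root_.map_sum]
      refine Finset.sum_congr rfl fun i _ => ?_
      rw [_root_.map_mul, MvPolynomial.eval_C, MvPolynomial.eval_X]
      ring
    have hevalW : MvPolynomial.eval (fun i => x i) (AddFormAux.polW n) = 1 := by
      rw [AddFormAux.polW, _root_.map_sum]
      simpa using hnorm
    have hevalQ : MvPolynomial.eval (fun i => x i) (AddFormAux.polQ n k v) = u - 1 := by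
      rw [AddFormAux.polQ, _root_.map_sub, hevalW, AddFormAux.polU, _root_.map_sum]
      congr 1
      refine Finset.sum_congr rfl fun c _ => ?_
      rw [_root_.map_pow, hevalL]
    have hevalP : MvPolynomial.eval (fun i => x i) P =
        K * ∑ s ∈ Finset.range (m + 1), betaC rho sig m s * (u - 1) ^ s := by
      rw [hP, _root_.map_mul, MvPolynomial.eval_C, _root_.map_sum]
      congr 1
      refine Finset.sum_congr rfl fun s _ => ?_
      rw [_root_.map_mul, MvPolynomial.eval_C, _root_.map_mul, _root_.map_pow, _root_.map_pow,
        hevalQ, hevalW, one_pow, mul_one]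
    rw [hevalP, hjm]
    simp only [jacobiR, jacobiP, hproj, hK]
    rw [mul_div_right_comm]
    congr 1
    refine Finset.sum_congr rfl fun s _ => ?_
    rw [betaC, show (2 * u - 1 - 1) / 2 = u - 1 from by ring]


lemma continuous_eval_eucl {N : ℕ} (P : MvPolynomial (Fin N) ℝ) :
    Continuous fun x : EuclideanSpace ℝ (Fin N) => MvPolynomial.eval (fun i => x i) P := by
  induction P using MvPolynomial.induction_on with
  | C a => simpa using continuous_const
  | add p q hp hq => simp only [_root_.map_add]; exact hp.add hq
  | mul_X p i hp =>
      simp only [_root_.map_mul, MvPolynomial.eval_X]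
      exact hp.mul (EuclideanSpace.proj (𝕜 := ℝ) i).continuous

lemma sigmaS_pos (m : ℕ) : 0 < sigmaS m := by
  rw [sigmaS]
  have h : (0 : ℝ) < ((m : ℝ) + 1) / 2 := by positivity
  apply div_pos (by positivity) (Real.Gamma_pos_of_pos h)

lemma kappaSq_pos (n k j : ℕ) (hn : 2 ≤ n) (hk : 1 ≤ k) (hkn : k ≤ n - 1) :
    0 < kappaSq n k j := by
  have hn' : (2 : ℝ) ≤ (n : ℝ) := by exact_mod_cast hn
  have hk' : (1 : ℝ) ≤ (k : ℝ) := by exact_mod_cast hk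
  have hj0 : (0 : ℝ) ≤ (j : ℝ) := Nat.cast_nonneg j
  have hkn' : (k : ℝ) ≤ (n : ℝ) - 1 := by
    have h1 : ((k : ℕ) : ℝ) ≤ ((n - 1 : ℕ) : ℝ) := by exact_mod_cast hkn
    rwa [Nat.cast_sub (by omega), Nat.cast_one] at h1
  rw [kappaSq]
  apply div_pos
  · apply mul_pos
    apply mul_pos
    apply mul_pos (sigmaS_pos n)
    · nlinarith
    · exact Real.Gamma_pos_of_pos (by nlinarith)
    · exact Real.Gamma_pos_of_pos (by nlinarith)
  · apply mul_pos
    apply mul_pos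
    apply mul_pos
    apply mul_pos (sigmaS_pos _) (sigmaS_pos _)
    · positivity
    · exact Real.Gamma_pos_of_pos (by nlinarith)
    · exact Real.Gamma_pos_of_pos (by nlinarith)

lemma dN_pos (n j : ℕ) (hn : 2 ≤ n) : 1 ≤ dN n j := by
  rw [dN]
  have hb : 0 < j.factorial * (n - 1).factorial :=
    Nat.mul_pos (Nat.factorial_pos _) (Nat.factorial_pos _)
  rw [Nat.one_le_div_iff hb]
  have h1 : j.factorial * (n - 2).factorial ≤ (n + j - 2).factorial := by
    have hd := Nat.factorial_mul_factorial_dvd_factorial_add j (n - 2)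
    have hle := Nat.le_of_dvd (Nat.factorial_pos _) hd
    have he : j + (n - 2) = n + j - 2 := by omega
    rwa [he] at hle
  calc j.factorial * (n - 1).factorial
      = (n - 1) * (j.factorial * (n - 2).factorial) := by
        rw [show n - 1 = (n - 2) + 1 by omega, Nat.factorial_succ]; ring
    _ ≤ (n - 1) * (n + j - 2).factorial := Nat.mul_le_mul_left _ h1
    _ ≤ (n + 2 * j - 1) * (n + j - 2).factorial := Nat.mul_le_mul_right _ (by omega)

lemma alphaJ_ne (n k j : ℕ) (hn : 2 ≤ n) (hk : 1 ≤ k) (hkn : k ≤ n - 1) :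
    alphaJ n k j ≠ 0 := by
  have h1 : 0 < Real.sqrt (kappaSq n k j) :=
    Real.sqrt_pos.mpr (kappaSq_pos n k j hn hk hkn)
  have h2 : 0 < Real.sqrt (dN n j) := by
    apply Real.sqrt_pos.mpr
    have := dN_pos n j hn
    exact_mod_cast Nat.lt_of_lt_of_le Nat.zero_lt_one (by exact_mod_cast this)
  exact (mul_pos h1 h2).ne'

/-- the addition formula
`R_{j/2}^{(ρ,σ)}(2|x^Tv|²-1) = α_j⁻¹ ∑_λ Y_{j,λ}(x) Ŷ_{j,λ}(v)`, where the induced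
Stiefel harmonics are `Ŷ_{j,λ}(v) = α_j ∫_{S^n} Y_{j,λ}(x) R_{j/2}^{(ρ,σ)}(2|x^Tv|²-1) d_*x`. -/
theorem addition_formula (n k j : ℕ) (hn : 2 ≤ n) (hk : 1 ≤ k) (hkn : k ≤ n - 1)
    (hj : Even j)
    (Y : Fin (dN n j) → EuclideanSpace ℝ (Fin (n + 1)) → ℝ)
    (hharm : ∀ lam, IsSphericalHarmonic n j (Y lam))
    (horth : ∀ lam lam' : Fin (dN n j),
      (sigmaS n)⁻¹ *
        ∫ x in Metric.sphere (0 : EuclideanSpace ℝ (Fin (n + 1))) 1,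
          Y lam x * Y lam' x ∂μH[(n : ℝ)] = if lam = lam' then 1 else 0)
    (hbasis : ∀ Z : EuclideanSpace ℝ (Fin (n + 1)) → ℝ, IsSphericalHarmonic n j Z →
      ∃ c : Fin (dN n j) → ℝ,
        ∀ x ∈ Metric.sphere (0 : EuclideanSpace ℝ (Fin (n + 1))) 1,
          Z x = ∑ lam, c lam * Y lam x)
    (x : EuclideanSpace ℝ (Fin (n + 1)))
    (hx : x ∈ Metric.sphere (0 : EuclideanSpace ℝ (Fin (n + 1))) 1)
    (v : Matrix (Fin (n + 1)) (Fin (n - k)) ℝ) (hv : vᵀ * v = 1) :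
    jacobiR (((k : ℝ) - 1) / 2) (((n : ℝ) - (k : ℝ)) / 2 - 1) (j / 2)
        (2 * stiefelProj n k x v ^ 2 - 1)
      = (alphaJ n k j)⁻¹ *
          ∑ lam, Y lam x *
            (alphaJ n k j * ((sigmaS n)⁻¹ *
              ∫ z in Metric.sphere (0 : EuclideanSpace ℝ (Fin (n + 1))) 1,
                Y lam z *
                  jacobiR (((k : ℝ) - 1) / 2) (((n : ℝ) - (k : ℝ)) / 2 - 1) (j / 2)
                    (2 * stiefelProj n k z v ^ 2 - 1) ∂μH[(n : ℝ)])) := by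
  classical
  have hSm : MeasurableSet (Metric.sphere (0 : EuclideanSpace ℝ (Fin (n + 1))) 1) :=
    Metric.isClosed_sphere.measurableSet
  have hf := zonal_harmonic n k j hn hk hkn hj v hv
  obtain ⟨c, hc⟩ := hbasis _ hf
  choose Pl hPl1 hPl2 hPl3 using hharm
  set g : Fin (dN n j) → EuclideanSpace ℝ (Fin (n + 1)) → ℝ :=
    fun lam x => MvPolynomial.eval (fun i => x i) (Pl lam) with hg
  have hgcont : ∀ lam, Continuous (g lam) := fun lam => continuous_eval_eucl (Pl lam)
  have hEq : ∀ lam, Set.EqOn (Y lam) (g lam)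
      (Metric.sphere (0 : EuclideanSpace ℝ (Fin (n + 1))) 1) :=
    fun lam x hx => hPl3 lam x hx
  have hsig : (sigmaS n) ≠ 0 := (sigmaS_pos n).ne'
  have hIntYY : ∀ lam, MeasureTheory.IntegrableOn (fun x => Y lam x * Y lam x)
      (Metric.sphere (0 : EuclideanSpace ℝ (Fin (n + 1))) 1) μH[(n : ℝ)] := by
    intro lam
    by_contra hcon
    have h0 := horth lam lam
    rw [if_pos rfl, MeasureTheory.integral_undef hcon, mul_zero] at h0
    exact zero_ne_one h0
  have hIntgg : ∀ lam, MeasureTheory.IntegrableOn (fun x => g lam x * g lam x)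
      (Metric.sphere (0 : EuclideanSpace ℝ (Fin (n + 1))) 1) μH[(n : ℝ)] := by
    intro lam
    exact (hIntYY lam).congr_fun (fun x hx => by dsimp only; rw [hEq lam hx]) hSm
  have hIntg : ∀ lam mu, MeasureTheory.IntegrableOn (fun x => g lam x * g mu x)
      (Metric.sphere (0 : EuclideanSpace ℝ (Fin (n + 1))) 1) μH[(n : ℝ)] := by
    intro lam mu
    apply MeasureTheory.Integrable.mono' ((hIntgg lam).add (hIntgg mu))
      ((hgcont lam).mul (hgcont mu)).aestronglyMeasurable
    filter_upwards with x
    simp only [Pi.add_apply, Pi.mul_apply]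
    rw [Real.norm_eq_abs]
    have h1 := abs_mul (g lam x) (g mu x)
    nlinarith [sq_nonneg (|g lam x| - |g mu x|), abs_nonneg (g lam x), abs_nonneg (g mu x),
      abs_mul_abs_self (g lam x), abs_mul_abs_self (g mu x)]
  have horthg : ∀ lam mu, (sigmaS n)⁻¹ *
      ∫ x in Metric.sphere (0 : EuclideanSpace ℝ (Fin (n + 1))) 1,
        g lam x * g mu x ∂μH[(n : ℝ)] = if lam = mu then 1 else 0 := by
    intro lam mu
    have e : ∫ x in Metric.sphere (0 : EuclideanSpace ℝ (Fin (n + 1))) 1,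
        Y lam x * Y mu x ∂μH[(n : ℝ)] =
        ∫ x in Metric.sphere (0 : EuclideanSpace ℝ (Fin (n + 1))) 1,
          g lam x * g mu x ∂μH[(n : ℝ)] :=
      MeasureTheory.setIntegral_congr_fun hSm fun x hx => by
        rw [hEq lam hx, hEq mu hx]
    rw [← e]
    exact horth lam mu
  have hcoef : ∀ lam, (sigmaS n)⁻¹ *
      ∫ z in Metric.sphere (0 : EuclideanSpace ℝ (Fin (n + 1))) 1,
        Y lam z * jacobiR (((k : ℝ) - 1) / 2) (((n : ℝ) - (k : ℝ)) / 2 - 1) (j / 2)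
          (2 * stiefelProj n k z v ^ 2 - 1) ∂μH[(n : ℝ)] = c lam := by
    intro lam
    have e : Set.EqOn
        (fun z => Y lam z * jacobiR (((k : ℝ) - 1) / 2) (((n : ℝ) - (k : ℝ)) / 2 - 1) (j / 2)
          (2 * stiefelProj n k z v ^ 2 - 1))
        (fun z => ∑ mu, c mu * (g lam z * g mu z))
        (Metric.sphere (0 : EuclideanSpace ℝ (Fin (n + 1))) 1) := by
      intro z hz
      have h1 := hc z hz
      simp only at h1 ⊢
      rw [hEq lam hz, h1, Finset.mul_sum]
      refine Finset.sum_congr rfl fun mu _ => ?_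
      rw [hEq mu hz]
      ring
    rw [MeasureTheory.setIntegral_congr_fun hSm e,
      MeasureTheory.integral_finset_sum _ (fun mu _ => ((hIntg lam mu).const_mul (c mu))),
      Finset.mul_sum]
    have h2 : ∀ mu ∈ Finset.univ (α := Fin (dN n j)), (sigmaS n)⁻¹ *
        ∫ z in Metric.sphere (0 : EuclideanSpace ℝ (Fin (n + 1))) 1,
          c mu * (g lam z * g mu z) ∂μH[(n : ℝ)] =
        c mu * (if lam = mu then 1 else 0) := by
      intro mu _
      rw [MeasureTheory.integral_const_mul, ← mul_assoc, mul_comm ((sigmaS n)⁻¹) (c mu),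
        mul_assoc, horthg lam mu]
    rw [Finset.sum_congr rfl h2]
    simp
  have hα : alphaJ n k j ≠ 0 := alphaJ_ne n k j hn hk hkn
  simp only [hcoef]
  have hsum : ∑ lam, Y lam x * (alphaJ n k j * c lam) =
      alphaJ n k j * ∑ lam, c lam * Y lam x := by
    rw [Finset.mul_sum]
    exact Finset.sum_congr rfl fun lam _ => by ring
  rw [hsum, ← mul_assoc, inv_mul_cancel₀ hα, one_mul]
  exact hc x hx
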